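/- Let A₁, A₂ ∈ ℝ^{N×N} and C ∈ ℝ^{m×N}, and let N₂ = ker O(A₂, C) and N₁ = ker O(A₁, C) ∩ e^{−A₁τ}·N₂, where O(A, C) = [C; CA; …; CA^{N−1}] and τ > 0. If z₀ ∈ N₁, then the switched trajectory z(t) = e^{A₁ t} z₀ for t ∈ [0, τ) and z(t) = e^{A₂(t−τ)} e^{A₁ τ} z₀ for t ≥ τ satisfies C·z(t) = 0 for all t ≥ 0. -/

import Mathlib

open Matrix Polynomial

private lemma pow_mem_span_aux {N : ℕ} (A : Matrix (Fin N) (Fin N) ℝ) (n : ℕ) :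
    A ^ n ∈ Submodule.span ℝ (Set.range fun k : Fin N => A ^ (k : ℕ)) := by
  induction n using Nat.strong_induction_on with
  | _ n ih =>
    by_cases hn : n < N
    · exact Submodule.subset_span ⟨⟨n, hn⟩, rfl⟩
    · push_neg at hn
      have hdeg : A.charpoly.natDegree = N := by
        rw [Matrix.charpoly_natDegree_eq_dim, Fintype.card_fin]
      have hc : A.charpoly.coeff N = 1 := by
        have := (Matrix.charpoly_monic A).coeff_natDegree; rwa [hdeg] at this
      have hCH := Matrix.aeval_self_charpoly A
      rw [Polynomial.aeval_eq_sum_range, hdeg, Finset.sum_range_succ, hc, one_smul] at hCH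
      have hAN : A ^ N = -∑ i ∈ Finset.range N, A.charpoly.coeff i • A ^ i := by
        linear_combination (norm := abel) hCH
      have hsplit : A ^ n = A ^ (n - N) * A ^ N := by
        rw [← pow_add, Nat.sub_add_cancel hn]
      rw [hsplit, hAN, mul_neg, Finset.mul_sum]
      refine Submodule.neg_mem _ (Submodule.sum_mem _ fun i hi => ?_)
      rw [mul_smul_comm, ← pow_add]
      refine Submodule.smul_mem _ _ (ih _ ?_)
      have hiN : i < N := Finset.mem_range.mp hi
      omega

private lemma key_exp_zero {N m : ℕ} (A : Matrix (Fin N) (Fin N) ℝ)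
    (C : Matrix (Fin m) (Fin N) ℝ) (v : Fin N → ℝ)
    (h : ∀ k < N, C.mulVec ((A ^ k).mulVec v) = 0) (t : ℝ) :
    C.mulVec ((NormedSpace.exp (t • A)).mulVec v) = 0 := by
  set S := Submodule.span ℝ (Set.range fun k : Fin N => A ^ (k : ℕ)) with hS
  have hclosed : IsClosed (S : Set (Matrix (Fin N) (Fin N) ℝ)) :=
    Submodule.closed_of_finiteDimensional S
  have hexp : NormedSpace.exp (t • A) ∈ S := by
    rw [NormedSpace.exp_eq_tsum ℝ]
    show (∑' n : ℕ, ((Nat.factorial n : ℝ))⁻¹ • (t • A) ^ n) ∈ S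
    by_cases hs : Summable (fun n : ℕ => ((Nat.factorial n : ℝ))⁻¹ • (t • A) ^ n)
    · refine hclosed.mem_of_tendsto hs.hasSum.tendsto_sum_nat
        (Filter.Eventually.of_forall fun k => Submodule.sum_mem _ fun i _ => ?_)
      rw [_root_.smul_pow]
      exact Submodule.smul_mem _ _ (Submodule.smul_mem _ _ (pow_mem_span_aux A i))
    · rw [tsum_eq_zero_of_not_summable hs]; exact S.zero_mem
  let φ : Matrix (Fin N) (Fin N) ℝ →ₗ[ℝ] (Fin m → ℝ) :=
    { toFun := fun M => C.mulVec (M.mulVec v)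
      map_add' := fun M₁ M₂ => by simp [Matrix.add_mulVec, Matrix.mulVec_add]
      map_smul' := fun c M => by simp [Matrix.smul_mulVec, Matrix.mulVec_smul] }
  have hker : S ≤ LinearMap.ker φ := by
    rw [hS, Submodule.span_le]
    rintro _ ⟨k, rfl⟩
    exact LinearMap.mem_ker.mpr (h k k.isLt)
  exact LinearMap.mem_ker.mp (hker hexp)

theorem switched_kernel_zero_output
    {N m : ℕ} (A₁ A₂ : Matrix (Fin N) (Fin N) ℝ) (C : Matrix (Fin m) (Fin N) ℝ)
    (τ : ℝ) (hτ : 0 < τ) (z₀ : Fin N → ℝ)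
    (h1 : ∀ k < N, C.mulVec ((A₁ ^ k).mulVec z₀) = 0)
    (h2 : ∀ k < N,
      C.mulVec ((A₂ ^ k).mulVec ((NormedSpace.exp (τ • A₁)).mulVec z₀)) = 0)
    (z : ℝ → Fin N → ℝ)
    (hz : ∀ t, z t = if t < τ then (NormedSpace.exp (t • A₁)).mulVec z₀
      else (NormedSpace.exp ((t - τ) • A₂)).mulVec
        ((NormedSpace.exp (τ • A₁)).mulVec z₀)) :
    ∀ t ≥ (0 : ℝ), C.mulVec (z t) = 0 := by
  intro t _
  rw [hz t]
  split_ifs with h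
  · exact key_exp_zero A₁ C z₀ h1 t
  · exact key_exp_zero A₂ C _ h2 (t - τ)
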